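/- Let f = h + conj(g) with h(z) = z + ∑_{n≥2} a_n z^n and g(z) = ∑_{n≥1} b_n z^n analytic on the unit disk and |b_1| < 1. If for some 0 ≤ α < 1 one has ∑_{n≥2} (n−α)|a_n| + ∑_{n≥1} (n+α)|b_n| ≤ 1 − α, then f is sense-preserving (|h'(z)| > |g'(z)| for all z in the unit disk) and univalent on the unit disk. -/

import Mathlib

open Metric

private lemma norm_pow_sub_pow_le_aux (z w : ℂ) (r : ℝ) (hz : ‖z‖ ≤ r) (hw : ‖w‖ ≤ r) :
    ∀ n : ℕ, ‖z ^ (n + 1) - w ^ (n + 1)‖ ≤ ((n : ℝ) + 1) * r ^ n * ‖z - w‖ := by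
  have hr : 0 ≤ r := le_trans (norm_nonneg z) hz
  intro n
  induction n with
  | zero => simp
  | succ n ih =>
    have key : z ^ (n + 2) - w ^ (n + 2)
        = z ^ (n + 1) * (z - w) + (z ^ (n + 1) - w ^ (n + 1)) * w := by ring
    calc ‖z ^ (n + 1 + 1) - w ^ (n + 1 + 1)‖
        = ‖z ^ (n + 1) * (z - w) + (z ^ (n + 1) - w ^ (n + 1)) * w‖ := by rw [← key]
      _ ≤ ‖z ^ (n + 1) * (z - w)‖ + ‖(z ^ (n + 1) - w ^ (n + 1)) * w‖ := norm_add_le _ _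
      _ ≤ r ^ (n + 1) * ‖z - w‖ + (((n : ℝ) + 1) * r ^ n * ‖z - w‖) * r := by
          rw [norm_mul, norm_mul, norm_pow]
          gcongr
      _ = ((((n : ℕ) + 1 : ℕ) : ℝ) + 1) * r ^ (n + 1) * ‖z - w‖ := by push_cast; ring

private lemma norm_pow_sub_pow_le (z w : ℂ) (r : ℝ) (hz : ‖z‖ ≤ r) (hw : ‖w‖ ≤ r) (n : ℕ) :
    ‖z ^ n - w ^ n‖ ≤ (n : ℝ) * r ^ (n - 1) * ‖z - w‖ := by
  cases n with
  | zero => simp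
  | succ m =>
    have := norm_pow_sub_pow_le_aux z w r hz hw m
    simpa [add_comm] using this

/-- Key numeric lemma. -/
private lemma key_lt (c d : ℕ → ℝ) (hc : ∀ n, 0 ≤ c n) (hd : ∀ n, 0 ≤ d n)
    (hc0 : c 0 = 0) (hd0 : d 0 = 0) (hc1 : c 1 = 0) (hd1 : d 1 < 1)
    (hsc : Summable c) (hsd : Summable d)
    (hsum : (∑' n, c n) + ∑' n, d n ≤ 1)
    (t : ℝ) (ht0 : 0 ≤ t) (ht1 : t < 1) :
    ∑' n : ℕ, (c n + d n) * t ^ (n - 1) < 1 := by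
  set u : ℕ → ℝ := fun n => t * (c n + d n) + (if n = 1 then (1 - t) * d 1 else 0) with hu
  have hd1' : 0 ≤ d 1 := hd 1
  have hterm : ∀ n, (c n + d n) * t ^ (n - 1) ≤ u n := by
    intro n
    match n with
    | 0 => simp [hu, hc0, hd0]
    | 1 =>
      simp only [hu, if_pos rfl, hc1]
      norm_num
      nlinarith
    | (m + 2) =>
      simp only [hu, if_neg (by omega : ¬ m + 2 = 1), add_zero]
      have hp : t ^ (m + 2 - 1) ≤ t ^ 1 :=
        pow_le_pow_of_le_one ht0 ht1.le (by omega)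
      calc (c (m+2) + d (m+2)) * t ^ (m + 2 - 1)
          ≤ (c (m+2) + d (m+2)) * t ^ 1 :=
            mul_le_mul_of_nonneg_left hp (add_nonneg (hc _) (hd _))
        _ = t * (c (m+2) + d (m+2)) := by ring
  have hsu : Summable u :=
    Summable.add ((hsc.add hsd).mul_left t) (hasSum_ite_eq 1 ((1 - t) * d 1)).summable
  have hse : Summable (fun n => (c n + d n) * t ^ (n - 1)) :=
    Summable.of_nonneg_of_le
      (fun n => mul_nonneg (add_nonneg (hc n) (hd n)) (pow_nonneg ht0 _)) hterm hsu
  have h1 : ∑' n, (c n + d n) * t ^ (n - 1) ≤ ∑' n, u n := Summable.tsum_le_tsum hterm hse hsu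
  have h2 : ∑' n, u n = t * ((∑' n, c n) + ∑' n, d n) + (1 - t) * d 1 := by
    rw [hu, Summable.tsum_add ((hsc.add hsd).mul_left t)
      (hasSum_ite_eq 1 ((1 - t) * d 1)).summable, tsum_ite_eq,
      tsum_mul_left, Summable.tsum_add hsc hsd]
  have h3 : t * ((∑' n, c n) + ∑' n, d n) + (1 - t) * d 1 < 1 := by
    have hS0 : 0 ≤ (∑' n, c n) + ∑' n, d n :=
      add_nonneg (tsum_nonneg hc) (tsum_nonneg hd)
    nlinarith
  linarith

/-- Jahangiri's coefficient criterion. If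
∑_{n≥2} (n−α)|aₙ| + ∑_{n≥1} (n+α)|bₙ| ≤ 1 − α for some 0 ≤ α < 1, then
f = h + conj g is sense-preserving and univalent on the unit disk. -/
theorem harmonic_starlike_coefficient_criterion
    (a b : ℕ → ℂ) (α : ℝ) (hα0 : 0 ≤ α) (hα1 : α < 1)
    (ha0 : a 0 = 0) (ha1 : a 1 = 0) (hb0 : b 0 = 0) (hb1 : ‖b 1‖ < 1)
    (h g : ℂ → ℂ)
    (hh : ∀ z ∈ ball (0 : ℂ) 1, h z = z + ∑' n : ℕ, a n * z ^ n)
    (hg : ∀ z ∈ ball (0 : ℂ) 1, g z = ∑' n : ℕ, b n * z ^ n)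
    (hsa : Summable (fun n : ℕ => ((n : ℝ) - α) * ‖a n‖))
    (hsb : Summable (fun n : ℕ => ((n : ℝ) + α) * ‖b n‖))
    (hcoef : (∑' n : ℕ, ((n : ℝ) - α) * ‖a n‖) + ∑' n : ℕ, ((n : ℝ) + α) * ‖b n‖
      ≤ 1 - α) :
    (∀ z ∈ ball (0 : ℂ) 1, ‖deriv g z‖ < ‖deriv h z‖) ∧
      Set.InjOn (fun z => h z + (starRingEnd ℂ) (g z)) (ball (0 : ℂ) 1) := by
  have h1α : (0 : ℝ) < 1 - α := by linarith
  set c : ℕ → ℝ := fun n => (n : ℝ) * ‖a n‖ with hc_def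
  set d : ℕ → ℝ := fun n => (n : ℝ) * ‖b n‖ with hd_def
  have hc_nonneg : ∀ n, 0 ≤ c n := fun n => by positivity
  have hd_nonneg : ∀ n, 0 ≤ d n := fun n => by positivity
  have hc_le : ∀ n, (1 - α) * c n ≤ ((n : ℝ) - α) * ‖a n‖ := by
    intro n
    match n with
    | 0 => simp [hc_def, ha0]
    | (m + 1) =>
      simp only [hc_def]
      have hm : (0 : ℝ) ≤ (m : ℝ) := Nat.cast_nonneg m
      push_cast
      nlinarith [norm_nonneg (a (m + 1)),
        mul_nonneg (mul_nonneg hα0 hm) (norm_nonneg (a (m + 1)))]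
  have hd_le : ∀ n, (1 - α) * d n ≤ ((n : ℝ) + α) * ‖b n‖ := by
    intro n
    simp only [hd_def]
    have hm : (0 : ℝ) ≤ (n : ℝ) := Nat.cast_nonneg n
    nlinarith [norm_nonneg (b n),
      mul_nonneg (mul_nonneg hα0 hm) (norm_nonneg (b n)),
      mul_nonneg hα0 (norm_nonneg (b n))]
  have hsc : Summable c := by
    apply Summable.of_nonneg_of_le hc_nonneg _ (hsa.mul_left (1 - α)⁻¹)
    intro n
    rw [← mul_le_mul_iff_right₀ h1α]
    calc (1 - α) * c n ≤ ((n : ℝ) - α) * ‖a n‖ := hc_le n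
      _ = (1 - α) * ((1 - α)⁻¹ * (((n : ℝ) - α) * ‖a n‖)) := by
          field_simp
  have hsd : Summable d := by
    apply Summable.of_nonneg_of_le hd_nonneg _ (hsb.mul_left (1 - α)⁻¹)
    intro n
    rw [← mul_le_mul_iff_right₀ h1α]
    calc (1 - α) * d n ≤ ((n : ℝ) + α) * ‖b n‖ := hd_le n
      _ = (1 - α) * ((1 - α)⁻¹ * (((n : ℝ) + α) * ‖b n‖)) := by
          field_simp
  have hsum_cd : (∑' n, c n) + ∑' n, d n ≤ 1 := by
    have h1 : ∑' n, (1 - α) * c n ≤ ∑' n : ℕ, ((n : ℝ) - α) * ‖a n‖ :=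
      Summable.tsum_le_tsum hc_le (hsc.mul_left _) hsa
    have h2 : ∑' n, (1 - α) * d n ≤ ∑' n : ℕ, ((n : ℝ) + α) * ‖b n‖ :=
      Summable.tsum_le_tsum hd_le (hsd.mul_left _) hsb
    rw [tsum_mul_left] at h1 h2
    have : (1 - α) * ((∑' n, c n) + ∑' n, d n) ≤ (1 - α) * 1 := by
      rw [mul_add]; linarith
    exact le_of_mul_le_mul_left this h1α
  have hc0 : c 0 = 0 := by simp [hc_def]
  have hd0 : d 0 = 0 := by simp [hd_def]
  have hc1 : c 1 = 0 := by simp [hc_def, ha1]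
  have hd1 : d 1 < 1 := by simpa [hd_def] using hb1
  -- the key strict inequality and split sums
  have ha_le : ∀ n, ‖a n‖ ≤ c n := by
    intro n
    match n with
    | 0 => simp [hc_def, ha0]
    | (m + 1) =>
      simp only [hc_def]
      have : (1 : ℝ) ≤ ((m + 1 : ℕ) : ℝ) := by exact_mod_cast Nat.one_le_iff_ne_zero.2 (by omega)
      nlinarith [norm_nonneg (a (m + 1))]
  have hb_le : ∀ n, ‖b n‖ ≤ d n := by
    intro n
    match n with
    | 0 => simp [hd_def, hb0]
    | (m + 1) =>
      simp only [hd_def]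
      have : (1 : ℝ) ≤ ((m + 1 : ℕ) : ℝ) := by exact_mod_cast Nat.one_le_iff_ne_zero.2 (by omega)
      nlinarith [norm_nonneg (b (m + 1))]
  have hsct : ∀ t : ℝ, 0 ≤ t → t ≤ 1 → Summable (fun n : ℕ => c n * t ^ (n - 1)) := by
    intro t ht0 ht1
    apply Summable.of_nonneg_of_le (fun n => by positivity) _ hsc
    intro n
    calc c n * t ^ (n - 1) ≤ c n * 1 :=
        mul_le_mul_of_nonneg_left (pow_le_one₀ ht0 ht1) (hc_nonneg n)
      _ = c n := mul_one _
  have hsdt : ∀ t : ℝ, 0 ≤ t → t ≤ 1 → Summable (fun n : ℕ => d n * t ^ (n - 1)) := by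
    intro t ht0 ht1
    apply Summable.of_nonneg_of_le (fun n => by positivity) _ hsd
    intro n
    calc d n * t ^ (n - 1) ≤ d n * 1 :=
        mul_le_mul_of_nonneg_left (pow_le_one₀ ht0 ht1) (hd_nonneg n)
      _ = d n := mul_one _
  have hkey : ∀ t : ℝ, 0 ≤ t → t < 1 →
      (∑' n : ℕ, c n * t ^ (n - 1)) + (∑' n : ℕ, d n * t ^ (n - 1)) < 1 := by
    intro t ht0 ht1
    have := key_lt c d hc_nonneg hd_nonneg hc0 hd0 hc1 hd1 hsc hsd hsum_cd t ht0 ht1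
    rw [show (fun n : ℕ => (c n + d n) * t ^ (n - 1))
        = fun n : ℕ => c n * t ^ (n - 1) + d n * t ^ (n - 1) by
          funext n; ring] at this
    rwa [Summable.tsum_add (hsct t ht0 ht1.le) (hsdt t ht0 ht1.le)] at this
  -- summability of the complex series on the closed disk
  have hsaz : ∀ z : ℂ, ‖z‖ ≤ 1 → Summable (fun n : ℕ => a n * z ^ n) := by
    intro z hz
    apply Summable.of_norm
    apply Summable.of_nonneg_of_le (fun n => norm_nonneg _) _ hsc
    intro n
    rw [norm_mul, norm_pow]
    calc ‖a n‖ * ‖z‖ ^ n ≤ ‖a n‖ * 1 :=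
        mul_le_mul_of_nonneg_left (pow_le_one₀ (norm_nonneg z) hz) (norm_nonneg _)
      _ = ‖a n‖ := mul_one _
      _ ≤ c n := ha_le n
  have hsbz : ∀ z : ℂ, ‖z‖ ≤ 1 → Summable (fun n : ℕ => b n * z ^ n) := by
    intro z hz
    apply Summable.of_norm
    apply Summable.of_nonneg_of_le (fun n => norm_nonneg _) _ hsd
    intro n
    rw [norm_mul, norm_pow]
    calc ‖b n‖ * ‖z‖ ^ n ≤ ‖b n‖ * 1 :=
        mul_le_mul_of_nonneg_left (pow_le_one₀ (norm_nonneg z) hz) (norm_nonneg _)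
      _ = ‖b n‖ := mul_one _
      _ ≤ d n := hb_le n
  -- derivative formulas
  have hDa : ∀ z ∈ ball (0 : ℂ) 1,
      HasDerivAt (fun y => ∑' n : ℕ, a n * y ^ n)
        (∑' n : ℕ, a n * ((n : ℂ) * z ^ (n - 1))) z := by
    intro z hz
    apply hasDerivAt_tsum_of_isPreconnected hsc isOpen_ball
      (convex_ball (0 : ℂ) 1).isPreconnected
      (g := fun n y => a n * y ^ n) (g' := fun n y => a n * ((n : ℂ) * y ^ (n - 1)))
      (y₀ := 0)
    · intro n y _
      exact (hasDerivAt_pow n y).const_mul (a n)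
    · intro n y hy
      rw [mem_ball_zero_iff] at hy
      rw [norm_mul, norm_mul, norm_pow, Complex.norm_natCast]
      calc ‖a n‖ * ((n : ℝ) * ‖y‖ ^ (n - 1)) ≤ ‖a n‖ * ((n : ℝ) * 1) := by
            gcongr
            exact pow_le_one₀ (norm_nonneg y) hy.le
        _ = c n := by simp only [hc_def, mul_one]; ring
    · exact mem_ball_self one_pos
    · exact hsaz 0 (by simp)
    · exact hz
  have hDb : ∀ z ∈ ball (0 : ℂ) 1,
      HasDerivAt (fun y => ∑' n : ℕ, b n * y ^ n)
        (∑' n : ℕ, b n * ((n : ℂ) * z ^ (n - 1))) z := by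
    intro z hz
    apply hasDerivAt_tsum_of_isPreconnected hsd isOpen_ball
      (convex_ball (0 : ℂ) 1).isPreconnected
      (g := fun n y => b n * y ^ n) (g' := fun n y => b n * ((n : ℂ) * y ^ (n - 1)))
      (y₀ := 0)
    · intro n y _
      exact (hasDerivAt_pow n y).const_mul (b n)
    · intro n y hy
      rw [mem_ball_zero_iff] at hy
      rw [norm_mul, norm_mul, norm_pow, Complex.norm_natCast]
      calc ‖b n‖ * ((n : ℝ) * ‖y‖ ^ (n - 1)) ≤ ‖b n‖ * ((n : ℝ) * 1) := by
            gcongr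
            exact pow_le_one₀ (norm_nonneg y) hy.le
        _ = d n := by simp only [hd_def, mul_one]; ring
    · exact mem_ball_self one_pos
    · exact hsbz 0 (by simp)
    · exact hz
  constructor
  · -- sense-preserving
    intro z hz
    have hz1 : ‖z‖ < 1 := mem_ball_zero_iff.1 hz
    have hderivh : deriv h z = 1 + ∑' n : ℕ, a n * ((n : ℂ) * z ^ (n - 1)) := by
      have heq : h =ᶠ[nhds z] fun y => y + ∑' n : ℕ, a n * y ^ n :=
        Filter.eventuallyEq_of_mem (isOpen_ball.mem_nhds hz) hh
      rw [heq.deriv_eq]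
      exact ((hasDerivAt_id z).add (hDa z hz)).deriv
    have hderivg : deriv g z = ∑' n : ℕ, b n * ((n : ℂ) * z ^ (n - 1)) := by
      have heq : g =ᶠ[nhds z] fun y => ∑' n : ℕ, b n * y ^ n :=
        Filter.eventuallyEq_of_mem (isOpen_ball.mem_nhds hz) hg
      rw [heq.deriv_eq]
      exact (hDb z hz).deriv
    have hTa : ‖∑' n : ℕ, a n * ((n : ℂ) * z ^ (n - 1))‖ ≤ ∑' n : ℕ, c n * ‖z‖ ^ (n - 1) := by
      apply tsum_of_norm_bounded (hsct ‖z‖ (norm_nonneg z) hz1.le).hasSum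
      intro n
      rw [norm_mul, norm_mul, norm_pow, Complex.norm_natCast]
      exact le_of_eq (by simp only [hc_def]; ring)
    have hTb : ‖∑' n : ℕ, b n * ((n : ℂ) * z ^ (n - 1))‖ ≤ ∑' n : ℕ, d n * ‖z‖ ^ (n - 1) := by
      apply tsum_of_norm_bounded (hsdt ‖z‖ (norm_nonneg z) hz1.le).hasSum
      intro n
      rw [norm_mul, norm_mul, norm_pow, Complex.norm_natCast]
      exact le_of_eq (by simp only [hd_def]; ring)
    have hk := hkey ‖z‖ (norm_nonneg z) hz1
    have hlow : (1 : ℝ) - ‖∑' n : ℕ, a n * ((n : ℂ) * z ^ (n - 1))‖ ≤ ‖deriv h z‖ := by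
      rw [hderivh]
      have h1 : ‖(1 : ℂ)‖ ≤ ‖1 + ∑' n : ℕ, a n * ((n : ℂ) * z ^ (n - 1))‖
          + ‖∑' n : ℕ, a n * ((n : ℂ) * z ^ (n - 1))‖ := by
        calc ‖(1 : ℂ)‖ = ‖(1 + ∑' n : ℕ, a n * ((n : ℂ) * z ^ (n - 1)))
              - ∑' n : ℕ, a n * ((n : ℂ) * z ^ (n - 1))‖ := by rw [add_sub_cancel_right]
          _ ≤ _ := norm_sub_le _ _
      simpa using h1
    rw [hderivg]
    calc ‖∑' n : ℕ, b n * ((n : ℂ) * z ^ (n - 1))‖ ≤ ∑' n : ℕ, d n * ‖z‖ ^ (n - 1) := hTb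
      _ < 1 - ∑' n : ℕ, c n * ‖z‖ ^ (n - 1) := by linarith
      _ ≤ 1 - ‖∑' n : ℕ, a n * ((n : ℂ) * z ^ (n - 1))‖ := by linarith
      _ ≤ ‖deriv h z‖ := by linarith
  · -- injectivity
    intro z1 hz1 z2 hz2 hfeq
    by_contra hne
    have hz1' : ‖z1‖ < 1 := mem_ball_zero_iff.1 hz1
    have hz2' : ‖z2‖ < 1 := mem_ball_zero_iff.1 hz2
    set r : ℝ := max ‖z1‖ ‖z2‖ with hr_def
    have hr0 : 0 ≤ r := le_max_of_le_left (norm_nonneg z1)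
    have hr1 : r < 1 := max_lt hz1' hz2'
    have hrz1 : ‖z1‖ ≤ r := le_max_left _ _
    have hrz2 : ‖z2‖ ≤ r := le_max_right _ _
    set s : ℝ := ‖z1 - z2‖ with hs_def
    have hs0 : 0 < s := by
      rw [hs_def, norm_pos_iff, sub_ne_zero]
      exact hne
    -- differences of the series
    have hA : h z1 - h z2 = (z1 - z2) + ∑' n : ℕ, a n * (z1 ^ n - z2 ^ n) := by
      rw [hh z1 hz1, hh z2 hz2]
      have : ∑' n : ℕ, a n * (z1 ^ n - z2 ^ n)
          = (∑' n : ℕ, a n * z1 ^ n) - ∑' n : ℕ, a n * z2 ^ n := by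
        rw [← Summable.tsum_sub (hsaz z1 hz1'.le) (hsaz z2 hz2'.le)]
        exact tsum_congr fun n => by ring
      rw [this]; ring
    have hB : g z1 - g z2 = ∑' n : ℕ, b n * (z1 ^ n - z2 ^ n) := by
      rw [hg z1 hz1, hg z2 hz2]
      rw [← Summable.tsum_sub (hsbz z1 hz1'.le) (hsbz z2 hz2'.le)]
      exact tsum_congr fun n => by ring
    -- norm bounds
    have hAn : ‖∑' n : ℕ, a n * (z1 ^ n - z2 ^ n)‖ ≤ (∑' n : ℕ, c n * r ^ (n - 1)) * s := by
      rw [← tsum_mul_right]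
      apply tsum_of_norm_bounded (((hsct r hr0 hr1.le).mul_right s)).hasSum
      intro n
      rw [norm_mul]
      calc ‖a n‖ * ‖z1 ^ n - z2 ^ n‖ ≤ ‖a n‖ * ((n : ℝ) * r ^ (n - 1) * s) := by
            apply mul_le_mul_of_nonneg_left _ (norm_nonneg _)
            exact norm_pow_sub_pow_le z1 z2 r hrz1 hrz2 n
        _ = c n * r ^ (n - 1) * s := by rw [hc_def]; ring
    have hBn : ‖∑' n : ℕ, b n * (z1 ^ n - z2 ^ n)‖ ≤ (∑' n : ℕ, d n * r ^ (n - 1)) * s := by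
      rw [← tsum_mul_right]
      apply tsum_of_norm_bounded (((hsdt r hr0 hr1.le).mul_right s)).hasSum
      intro n
      rw [norm_mul]
      calc ‖b n‖ * ‖z1 ^ n - z2 ^ n‖ ≤ ‖b n‖ * ((n : ℝ) * r ^ (n - 1) * s) := by
            apply mul_le_mul_of_nonneg_left _ (norm_nonneg _)
            exact norm_pow_sub_pow_le z1 z2 r hrz1 hrz2 n
        _ = d n * r ^ (n - 1) * s := by rw [hd_def]; ring
    -- derive the contradiction
    have heq : (z1 - z2) = -(∑' n : ℕ, a n * (z1 ^ n - z2 ^ n))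
        - (starRingEnd ℂ) (∑' n : ℕ, b n * (z1 ^ n - z2 ^ n)) := by
      have h0 : h z1 + (starRingEnd ℂ) (g z1) = h z2 + (starRingEnd ℂ) (g z2) := hfeq
      have h1 : h z1 - h z2 = -((starRingEnd ℂ) (g z1 - g z2)) := by
        rw [map_sub]
        linear_combination h0
      rw [hA, hB] at h1
      linear_combination h1
    have hnorm : s ≤ (∑' n : ℕ, c n * r ^ (n - 1)) * s + (∑' n : ℕ, d n * r ^ (n - 1)) * s := by
      calc s = ‖z1 - z2‖ := hs_def
        _ = ‖-(∑' n : ℕ, a n * (z1 ^ n - z2 ^ n))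
            - (starRingEnd ℂ) (∑' n : ℕ, b n * (z1 ^ n - z2 ^ n))‖ := by rw [heq]
        _ ≤ ‖-(∑' n : ℕ, a n * (z1 ^ n - z2 ^ n))‖
            + ‖(starRingEnd ℂ) (∑' n : ℕ, b n * (z1 ^ n - z2 ^ n))‖ := norm_sub_le _ _
        _ = ‖∑' n : ℕ, a n * (z1 ^ n - z2 ^ n)‖
            + ‖∑' n : ℕ, b n * (z1 ^ n - z2 ^ n)‖ := by
            rw [norm_neg, RCLike.norm_conj]
        _ ≤ _ := add_le_add hAn hBn
    have hk := hkey r hr0 hr1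
    nlinarith
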